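/- Let M ≥ 1, let u_1, …, u_M be real numbers with S = ∑_{m=1}^{M} u_m ≠ 0, and let b > 0 satisfy b ≥ max_m |u_m|. Let û_1, …, û_M be independent random variables with P(û_m = 1) = (b + u_m)/(2b) and P(û_m = −1) = (b − u_m)/(2b). Let s = sign(S). Then: (i) the average wrong-sign probability equals (1/M)·∑_{m=1}^{M} P(û_m ≠ s) = (bM − |S|)/(2bM); and (ii) P(s·∑_{m=1}^{M} û_m ≤ 0) ≤ (1 − x²)^{M/2}, where x = |S|/(bM). -/

import Mathlib

open MeasureTheory ProbabilityTheory

/-- For the `sto-sign` compressor with parameter `b ≥ max |u_m|` applied to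
reals `u_1, …, u_M` with `S = ∑ u_m ≠ 0`:
(i) the average wrong-sign probability equals `(bM - |S|)/(2bM)`, and
(ii) `P(sign(S) · ∑ û_m ≤ 0) ≤ (1 - x²)^(M/2)` with `x = |S|/(bM)`. -/
theorem stmt_1 {Ω : Type*} [MeasurableSpace Ω] (P : Measure Ω) [IsProbabilityMeasure P]
    (M : ℕ) (hM : 1 ≤ M)
    (u : Fin M → ℝ) (S : ℝ) (hS : S = ∑ m, u m) (hS0 : S ≠ 0)
    (b : ℝ) (hb : 0 < b) (hbu : ∀ m, |u m| ≤ b)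
    (uhat : Fin M → Ω → ℝ)
    (hmeas : ∀ m, Measurable (uhat m))
    (hindep : iIndepFun uhat P)
    (h1 : ∀ m, (P {ω | uhat m ω = 1}).toReal = (b + u m) / (2 * b))
    (hneg1 : ∀ m, (P {ω | uhat m ω = -1}).toReal = (b - u m) / (2 * b))
    (s : ℝ) (hs : s = Real.sign S)
    (x : ℝ) (hx : x = |S| / (b * M)) :
    (1 / M) * (∑ m, (P {ω | uhat m ω ≠ s}).toReal) = (b * M - |S|) / (2 * b * M) ∧
    (P {ω | s * ∑ m, uhat m ω ≤ 0}).toReal ≤ (1 - x ^ 2) ^ ((M : ℝ) / 2) := by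
  have hbne : b ≠ 0 := hb.ne'
  have hMposR : (0:ℝ) < (M:ℝ) := by exact_mod_cast Nat.lt_of_lt_of_le Nat.zero_lt_one hM
  have hMne : (M:ℝ) ≠ 0 := hMposR.ne'
  have hscases : (s = 1 ∧ 0 < S) ∨ (s = -1 ∧ S < 0) := by
    rcases lt_trichotomy S 0 with h | h | h
    · exact Or.inr ⟨by rw [hs, Real.sign_of_neg h], h⟩
    · exact absurd h hS0
    · exact Or.inl ⟨by rw [hs, Real.sign_of_pos h], h⟩
  have hsS : s * S = |S| := by
    rcases hscases with ⟨h1', h2⟩ | ⟨h1', h2⟩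
    · rw [h1', one_mul, abs_of_pos h2]
    · rw [h1', abs_of_neg h2]; ring
  have hsu_le : ∀ m, s * u m ≤ b := by
    intro m
    rcases hscases with ⟨h1', _⟩ | ⟨h1', _⟩
    · rw [h1', one_mul]; exact (le_abs_self _).trans (hbu m)
    · rw [h1']; have := (neg_abs_le (u m)).trans (le_abs_self (u m))
      have := neg_le_of_abs_le (hbu m); nlinarith [hbu m, abs_nonneg (u m), neg_abs_le (u m)]
  have hsu_ge : ∀ m, -b ≤ s * u m := by
    intro m
    rcases hscases with ⟨h1', _⟩ | ⟨h1', _⟩ <;> rw [h1'] <;>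
      nlinarith [hbu m, neg_abs_le (u m), le_abs_self (u m)]
  have hbsu1 : ∀ m, 0 ≤ (b - s * u m) / (2 * b) := fun m =>
    div_nonneg (by linarith [hsu_le m]) (by linarith)
  have hbsu2 : ∀ m, 0 ≤ (b + s * u m) / (2 * b) := fun m =>
    div_nonneg (by linarith [hsu_ge m]) (by linarith)
  -- probability of hitting s
  have hPs : ∀ m, (P {ω | uhat m ω = s}).toReal = (b + s * u m) / (2 * b) := by
    intro m
    rcases hscases with ⟨h1', _⟩ | ⟨h1', _⟩
    · rw [h1', one_mul]; exact h1 m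
    · rw [h1']; rw [hneg1 m]; ring_nf
  -- measurability of the equality sets
  have hApre : ∀ m (c : ℝ), {ω | uhat m ω = c} = uhat m ⁻¹' {c} := fun m c => rfl
  have hAmeas : ∀ m (c : ℝ), MeasurableSet {ω | uhat m ω = c} := fun m c =>
    (hmeas m) (measurableSet_singleton c)
  have hsmeas : ∀ m, MeasurableSet {ω | uhat m ω = s} := fun m => hAmeas m s
  -- part (i)
  have hwrong : ∀ m, (P {ω | uhat m ω ≠ s}).toReal = (b - s * u m) / (2 * b) := by
    intro m
    have hc : {ω | uhat m ω ≠ s} = {ω | uhat m ω = s}ᶜ := rfl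
    rw [hc, prob_compl_eq_one_sub (hsmeas m), ENNReal.toReal_sub_of_le prob_le_one
      ENNReal.one_ne_top, ENNReal.toReal_one, hPs m]
    field_simp; ring
  have part1 : (1 / (M:ℝ)) * (∑ m, (P {ω | uhat m ω ≠ s}).toReal)
      = (b * M - |S|) / (2 * b * M) := by
    have : ∑ m, (P {ω | uhat m ω ≠ s}).toReal = ((M:ℝ) * b - s * S) / (2 * b) := by
      simp only [hwrong]
      rw [← Finset.sum_div]
      congr 1
      rw [Finset.sum_sub_distrib, Finset.sum_const, Finset.card_univ, Fintype.card_fin,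
        ← Finset.mul_sum, hS]
      push_cast; ring
    rw [this, hsS]
    field_simp
  refine ⟨part1, ?_⟩
  -- part (ii)
  have hxpos : 0 < x := by
    rw [hx]; exact div_pos (abs_pos.mpr hS0) (by positivity)
  have hSle : |S| ≤ b * M := by
    rw [hS]
    calc |∑ m, u m| ≤ ∑ m, |u m| := Finset.abs_sum_le_sum_abs _ _
    _ ≤ ∑ _m : Fin M, b := Finset.sum_le_sum fun m _ => hbu m
    _ = b * M := by rw [Finset.sum_const, Finset.card_univ, Fintype.card_fin]; ring
  have hxle : x ≤ 1 := by rw [hx]; rw [div_le_one (by positivity)]; exact hSle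
  have habsS : |S| = x * (b * M) := by rw [hx]; field_simp
  rcases eq_or_lt_of_le hxle with hx1 | hx1
  · -- degenerate case x = 1 : each uhat m = s a.s., event is null
    have hSeq : s * S = b * M := by rw [hsS, habsS, hx1, one_mul]
    have hsum0 : ∑ m, (b - s * u m) = 0 := by
      rw [Finset.sum_sub_distrib, Finset.sum_const, Finset.card_univ, Fintype.card_fin,
        ← Finset.mul_sum, ← hS, hSeq]
      push_cast; ring
    have hall : ∀ m, s * u m = b := by
      intro m
      have h := (Finset.sum_eq_zero_iff_of_nonneg (fun i _ => by
        have := hsu_le i; linarith)).mp hsum0 m (Finset.mem_univ m)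
      linarith
    have hone : ∀ m, P {ω | uhat m ω = s} = 1 := by
      intro m
      have ht : (P {ω | uhat m ω = s}).toReal = 1 := by
        rw [hPs m, hall m]; field_simp; ring
      have := ENNReal.toReal_eq_one_iff (P {ω | uhat m ω = s})
      exact this.mp ht
    set N : Set Ω := ⋃ m, {ω | uhat m ω = s}ᶜ with hN
    have hNnull : P N = 0 := by
      refine measure_iUnion_null fun m => ?_
      rw [prob_compl_eq_zero_iff (hsmeas m)]; exact hone m
    have hsub : {ω | s * ∑ m, uhat m ω ≤ 0} ⊆ N := by
      intro ω hω
      by_contra hωN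
      simp only [hN, Set.mem_iUnion, Set.mem_compl_iff, Set.mem_setOf_eq, not_exists,
        not_not] at hωN
      have : s * ∑ m, uhat m ω = (M:ℝ) * (s * s) := by
        rw [Finset.sum_congr rfl fun m _ => hωN m, Finset.sum_const, Finset.card_univ,
          Fintype.card_fin]; push_cast; ring
      have hss : s * s = 1 := by rcases hscases with ⟨h1', _⟩ | ⟨h1', _⟩ <;> rw [h1'] <;> norm_num
      have hωev : s * ∑ m, uhat m ω ≤ 0 := hω
      rw [this, hss, mul_one] at hωev
      linarith
    have : P {ω | s * ∑ m, uhat m ω ≤ 0} = 0 := measure_mono_null hsub hNnull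
    rw [this]
    simp only [ENNReal.toReal_zero]
    have : (1:ℝ) - x ^ 2 = 0 := by rw [hx1]; ring
    rw [this, Real.zero_rpow (by positivity)]
  · -- main case x < 1
    have h1mx : (0:ℝ) < 1 - x := by linarith
    have h1px : (0:ℝ) < 1 + x := by linarith
    set sa := Real.sqrt (1 - x) with hsa
    set sb := Real.sqrt (1 + x) with hsb
    have hsapos : 0 < sa := Real.sqrt_pos.mpr h1mx
    have hsbpos : 0 < sb := Real.sqrt_pos.mpr h1px
    have hsa2 : sa ^ 2 = 1 - x := Real.sq_sqrt h1mx.le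
    have hsb2 : sb ^ 2 = 1 + x := Real.sq_sqrt h1px.le
    set L := sb / sa with hL
    have hLpos : 0 < L := div_pos hsbpos hsapos
    have hLge1 : 1 ≤ L := by
      rw [hL, le_div_iff₀ hsapos, one_mul]
      exact Real.sqrt_le_sqrt (by linarith)
    set t := Real.log L with ht
    have htnn : 0 ≤ t := Real.log_nonneg hLge1
    have hexpt : Real.exp t = L := Real.exp_log hLpos
    set X : Fin M → Ω → ℝ := fun m ω => (-s) * uhat m ω with hX
    have hXmeas : ∀ m, Measurable (X m) := fun m => (hmeas m).const_mul _
    have hXindep : iIndepFun X P :=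
      hindep.comp (fun _ y => (-s) * y) (fun _ => measurable_id.const_mul _)
    -- per-coordinate mgf
    set A : Fin M → Set Ω := fun m => {ω | uhat m ω = 1} with hA
    set B : Fin M → Set Ω := fun m => {ω | uhat m ω = -1} with hB
    have hABnull : ∀ m, P ((A m ∪ B m)ᶜ) = 0 := by
      intro m
      rw [prob_compl_eq_zero_iff ((hAmeas m 1).union (hAmeas m (-1)))]
      have hdisj : Disjoint (A m) (B m) := by
        rw [Set.disjoint_left]; intro ω h1ω h2ω
        simp only [hA, hB, Set.mem_setOf_eq] at h1ω h2ω
        rw [h1ω] at h2ω; norm_num at h2ω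
      have hsum : (P (A m)).toReal + (P (B m)).toReal = 1 := by
        rw [h1 m, hneg1 m]; field_simp; ring
      have hPA := measure_ne_top P (A m)
      have hPB := measure_ne_top P (B m)
      rw [measure_union hdisj (hAmeas m (-1))]
      have : ((P (A m)) + (P (B m))).toReal = 1 := by
        rw [ENNReal.toReal_add hPA hPB]; exact hsum
      exact (ENNReal.toReal_eq_one_iff _).mp this
    set g : Fin M → Ω → ℝ := fun m =>
      (A m).indicator (fun _ => Real.exp (t * (-s))) +
      (B m).indicator (fun _ => Real.exp (t * s)) with hg
    have hgae : ∀ m, (fun ω => Real.exp (t * X m ω)) =ᵐ[P] g m := by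
      intro m
      have : ∀ ω ∈ (A m ∪ B m), Real.exp (t * X m ω) = g m ω := by
        intro ω hω
        rcases hω with hω | hω
        · have hω1 : uhat m ω = 1 := hω
          have hωB : ω ∉ B m := by
            simp only [hB, Set.mem_setOf_eq, hω1]; norm_num
          simp only [hg, Pi.add_apply, Set.indicator_of_mem hω, Set.indicator_of_notMem hωB,
            add_zero, hX, hω1, mul_one]
        · have hω1 : uhat m ω = -1 := hω
          have hωA : ω ∉ A m := by
            simp only [hA, Set.mem_setOf_eq, hω1]; norm_num
          simp only [hg, Pi.add_apply, Set.indicator_of_notMem hωA, Set.indicator_of_mem hω,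
            zero_add, hX, hω1]
          ring_nf
      refine Filter.eventuallyEq_of_mem (by rw [mem_ae_iff]; exact hABnull m) this
    have hgint : ∀ m, Integrable (g m) P := fun m =>
      ((integrable_const _).indicator (hAmeas m 1)).add
        ((integrable_const _).indicator (hAmeas m (-1)))
    have hXint : ∀ m, Integrable (fun ω => Real.exp (t * X m ω)) P := fun m =>
      (hgint m).congr (hgae m).symm
    have hmgf : ∀ m, mgf (X m) P t =
        Real.exp (t * (-s)) * (P (A m)).toReal + Real.exp (t * s) * (P (B m)).toReal := by
      intro m
      rw [mgf, integral_congr_ae (hgae m), hg]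
      simp only [Pi.add_apply]
      rw [integral_add ((integrable_const _).indicator (hAmeas m 1))
        ((integrable_const _).indicator (hAmeas m (-1))),
        integral_indicator_const _ (hAmeas m 1), integral_indicator_const _ (hAmeas m (-1))]
      simp [mul_comm]
      rfl
    -- value of each mgf
    set a : Fin M → ℝ := fun m => ((b - s * u m) / (2 * b)) * L + ((b + s * u m) / (2 * b)) / L
      with ha
    have hmgfa : ∀ m, mgf (X m) P t = a m := by
      intro m
      have hPA : (P (A m)).toReal = (b + u m) / (2 * b) := h1 m
      have hPB : (P (B m)).toReal = (b - u m) / (2 * b) := hneg1 m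
      rw [hmgf m, hPA, hPB, ha]
      rcases hscases with ⟨h1', _⟩ | ⟨h1', _⟩ <;> rw [h1']
      · have he1 : Real.exp (t * (-1)) = L⁻¹ := by
          rw [mul_neg_one, Real.exp_neg, hexpt]
        have he2 : Real.exp (t * 1) = L := by rw [mul_one, hexpt]
        rw [he1, he2]; ring
      · have he1 : Real.exp (t * (-(-1))) = L := by rw [neg_neg, mul_one, hexpt]
        have he2 : Real.exp (t * (-1)) = L⁻¹ := by rw [mul_neg_one, Real.exp_neg, hexpt]
        rw [he1, he2]; ring
    have hanonneg : ∀ m, 0 ≤ a m := fun m =>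
      add_nonneg (mul_nonneg (hbsu1 m) hLpos.le) (div_nonneg (hbsu2 m) hLpos.le)
    have hint : Integrable (fun ω => Real.exp (t * (∑ m, X m) ω)) P :=
      hXindep.integrable_exp_mul_sum hXmeas (fun m _ => hXint m)
    have hset : {ω | s * ∑ m, uhat m ω ≤ 0} = {ω | (0:ℝ) ≤ (∑ m, X m) ω} := by
      ext ω
      simp only [Set.mem_setOf_eq, Finset.sum_apply, hX]
      rw [← Finset.mul_sum, neg_mul, neg_nonneg]
    have hmgf_prod : mgf (∑ m, X m) P t = ∏ m, a m := by
      rw [hXindep.mgf_sum hXmeas Finset.univ]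
      exact Finset.prod_congr rfl fun m _ => hmgfa m
    have hgm := Real.geom_mean_le_arith_mean_weighted Finset.univ (fun _ => (M:ℝ)⁻¹) a
      (fun i _ => by positivity) (by
        simp only [Finset.sum_const, Finset.card_univ, Fintype.card_fin, nsmul_eq_mul]
        field_simp) (fun i _ => hanonneg i)
    have hprod : ∏ m, a m ≤ (∑ m, (M:ℝ)⁻¹ * a m) ^ M := by
      have heq : ∏ m, a m = (∏ m, a m ^ (M:ℝ)⁻¹) ^ M := by
        rw [← Finset.prod_pow]
        refine Finset.prod_congr rfl fun m _ => ?_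
        rw [← Real.rpow_natCast (a m ^ (M:ℝ)⁻¹) M, ← Real.rpow_mul (hanonneg m),
          inv_mul_cancel₀ hMne, Real.rpow_one]
      rw [heq]
      exact pow_le_pow_left₀ (Finset.prod_nonneg fun m _ => Real.rpow_nonneg (hanonneg m) _) hgm M
    have hsum1 : ∑ m, (b - s * u m) = (M:ℝ) * b - s * S := by
      rw [Finset.sum_sub_distrib, Finset.sum_const, Finset.card_univ, Fintype.card_fin,
        ← Finset.mul_sum, ← hS]
      push_cast; ring
    have hsum2 : ∑ m, (b + s * u m) = (M:ℝ) * b + s * S := by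
      rw [Finset.sum_add_distrib, Finset.sum_const, Finset.card_univ, Fintype.card_fin,
        ← Finset.mul_sum, ← hS]
      push_cast; ring
    have h1s : ∑ m, a m = ((M:ℝ) * (1 - x) / 2) * L + ((M:ℝ) * (1 + x) / 2) / L := by
      simp only [ha]
      rw [Finset.sum_add_distrib]
      congr 1
      · rw [← Finset.sum_mul, ← Finset.sum_div, hsum1, hsS, habsS]
        congr 1
        field_simp
      · rw [← Finset.sum_div, ← Finset.sum_div, hsum2, hsS, habsS]
        congr 1
        field_simp
    have hsum_a : ∑ m, (M:ℝ)⁻¹ * a m = ((1 - x) * L + (1 + x) / L) / 2 := by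
      rw [← Finset.mul_sum, h1s]
      field_simp
    have hkey : ((1 - x) * L + (1 + x) / L) / 2 = Real.sqrt (1 - x ^ 2) := by
      have hx2 : (1:ℝ) - x ^ 2 = (1 - x) * (1 + x) := by ring
      rw [hx2, Real.sqrt_mul h1mx.le, ← hsa, ← hsb, hL, ← hsa2, ← hsb2]
      field_simp [hsapos.ne', hsbpos.ne']
      ring
    have h0x : (0:ℝ) ≤ 1 - x ^ 2 :=
      le_of_le_of_eq (mul_nonneg h1mx.le h1px.le) (by ring)
    have hfinal : (Real.sqrt (1 - x ^ 2)) ^ M = (1 - x ^ 2) ^ ((M:ℝ) / 2) := by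
      rw [Real.sqrt_eq_rpow, ← Real.rpow_natCast ((1 - x ^ 2) ^ ((1:ℝ)/2)) M,
        ← Real.rpow_mul h0x]
      congr 1
      ring
    calc (P {ω | s * ∑ m, uhat m ω ≤ 0}).toReal
        ≤ Real.exp (-t * 0) * mgf (∑ m, X m) P t := by
          rw [hset]; exact measure_ge_le_exp_mul_mgf 0 htnn hint
      _ = ∏ m, a m := by simp only [mul_zero, neg_zero, Real.exp_zero, one_mul]; exact hmgf_prod
      _ ≤ (∑ m, (M:ℝ)⁻¹ * a m) ^ M := hprod
      _ = (Real.sqrt (1 - x ^ 2)) ^ M := by rw [hsum_a, hkey]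
      _ = (1 - x ^ 2) ^ ((M:ℝ) / 2) := hfinal
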